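/- Let X_t, X_{t+1}, …, X_{t+m} be independent real-valued random variables with E[X_s²] = σ_s² and E[(X_s² − σ_s²)²] = κ_s < ∞, let w_s ≥ 0 be weights and τ > 0, and define the weighted Huber score r(θ) = Σ_{s=t}^{t+m} min( w_s |X_s² − θ|, τ ) · sgn( X_s² − θ ). Then for every θ ∈ ℝ, E[ exp( r(θ)/τ ) ] ≤ exp( Σ_{s=t}^{t+m} [ w_s (σ_s² − θ)/τ + w_s² ( κ_s + (σ_s² − θ)² ) / τ² ] ), and likewise E[ exp( −r(θ)/τ ) ] ≤ exp( Σ_{s=t}^{t+m} [ −w_s (σ_s² − θ)/τ + w_s² ( κ_s + (σ_s² − θ)² ) / τ² ] ). -/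

import Mathlib

open MeasureTheory ProbabilityTheory Finset

lemma exp_le_one_add_add_sq {x : ℝ} (hx : |x| ≤ 1) : Real.exp x ≤ 1 + x + x ^ 2 := by
  have h := Real.exp_bound hx (by norm_num : 0 < 2)
  have hs : ∑ m ∈ range 2, x ^ m / m.factorial = 1 + x := by
    simp [Finset.sum_range_succ]
  rw [hs] at h
  have := (abs_sub_le_iff.1 h).1
  have h2 : |x| ^ 2 = x ^ 2 := sq_abs x
  norm_num [Nat.factorial] at this
  nlinarith [sq_nonneg x]

lemma catoni_core (x : ℝ) : Real.exp (min |x| 1 * Real.sign x) ≤ 1 + x + x ^ 2 := by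
  rcases lt_trichotomy x 0 with h | h | h
  · rw [Real.sign_of_neg h, abs_of_neg h]
    rcases le_total (-x) 1 with h1 | h1
    · rw [min_eq_left h1]
      have : -x * -1 = x := by ring
      rw [this]
      exact exp_le_one_add_add_sq (by rw [abs_of_neg h]; exact h1)
    · rw [min_eq_right h1]
      have he : Real.exp (1 * -1) ≤ 1 := by
        rw [show (1 : ℝ) * -1 = -1 by ring]
        exact Real.exp_le_one_iff.mpr (by norm_num)
      nlinarith
  · simp [h]
  · rw [Real.sign_of_pos h, abs_of_pos h, mul_one]
    rcases le_total x 1 with h1 | h1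
    · rw [min_eq_left h1]
      exact exp_le_one_add_add_sq (by rw [abs_of_pos h]; exact h1)
    · rw [min_eq_right h1]
      have := Real.exp_one_lt_d9
      nlinarith

lemma term_eq {w τ u : ℝ} (hw : 0 ≤ w) (hτ : 0 < τ) :
    min (w * |u|) τ * Real.sign u / τ = min |w * u / τ| 1 * Real.sign (w * u / τ) := by
  rcases eq_or_lt_of_le hw with h0 | hw'
  · simp [← h0, min_eq_left hτ.le]
  · have habs : |w * u / τ| = w * |u| / τ := by
      rw [abs_div, abs_mul, abs_of_pos hw', abs_of_pos hτ]
    have hsign : Real.sign (w * u / τ) = Real.sign u := by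
      rcases lt_trichotomy u 0 with h | h | h
      · rw [Real.sign_of_neg h,
          Real.sign_of_neg (div_neg_of_neg_of_pos (mul_neg_of_pos_of_neg hw' h) hτ)]
      · simp [h]
      · rw [Real.sign_of_pos h, Real.sign_of_pos (div_pos (mul_pos hw' h) hτ)]
    rw [habs, hsign]
    have hmin : min (w * |u| / τ) 1 = min (w * |u|) τ / τ := by
      rw [show (1:ℝ) = τ / τ from (div_self hτ.ne').symm, min_div_div_right hτ.le]
    rw [hmin]
    ring

lemma measurable_realSign : Measurable Real.sign := by
  have : Real.sign = fun r : ℝ => if r < 0 then (-1 : ℝ) else if 0 < r then 1 else 0 := by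
    funext r; rfl
  rw [this]
  exact Measurable.ite measurableSet_Iio measurable_const
    (Measurable.ite measurableSet_Ioi measurable_const measurable_const)


lemma single_term_bound {Ω : Type*} [MeasurableSpace Ω] (μ : Measure Ω) [IsProbabilityMeasure μ]
    (V : Ω → ℝ) (hV : Measurable V) (σ2 k w τ θ : ℝ) (hw : 0 ≤ w) (hτ : 0 < τ)
    (hmean : ∫ ω, V ω ∂μ = σ2) (hsec : ∫ ω, (V ω - σ2) ^ 2 ∂μ = k)
    (hint1 : Integrable V μ) (hint2 : Integrable (fun ω => (V ω) ^ 2) μ)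
    (ε : ℝ) (hε : ε = 1 ∨ ε = -1) :
    ∫ ω, Real.exp (ε / τ * (min (w * |V ω - θ|) τ * Real.sign (V ω - θ))) ∂μ
      ≤ Real.exp (ε * (w * (σ2 - θ)) / τ + w ^ 2 * (k + (σ2 - θ) ^ 2) / τ ^ 2) := by
  have hε2 : ε ^ 2 = 1 := by rcases hε with h | h <;> rw [h] <;> norm_num
  set c0 : ℝ := 1 - w * ε * θ / τ + w ^ 2 * θ ^ 2 / τ ^ 2 with hc0
  set c1 : ℝ := w * ε / τ - 2 * w ^ 2 * θ / τ ^ 2 with hc1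
  set c2 : ℝ := w ^ 2 / τ ^ 2 with hc2
  have hg_int : Integrable (fun ω => c0 + c1 * V ω + c2 * (V ω) ^ 2) μ :=
    ((integrable_const c0).add (hint1.const_mul c1)).add (hint2.const_mul c2)
  have hpt : ∀ ω, Real.exp (ε / τ * (min (w * |V ω - θ|) τ * Real.sign (V ω - θ)))
      ≤ c0 + c1 * V ω + c2 * (V ω) ^ 2 := by
    intro ω
    set u : ℝ := V ω - θ with hu
    have h1 : ε / τ * (min (w * |u|) τ * Real.sign u)
        = min (w * |ε * u|) τ * Real.sign (ε * u) / τ := by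
      rcases hε with h | h
      · rw [h]; simp; ring
      · rw [h]
        rw [show (-1 : ℝ) * u = -u by ring, abs_neg, Real.sign_neg]
        ring
    have h2 := catoni_core (w * (ε * u) / τ)
    rw [h1, term_eq hw hτ]
    refine h2.trans ?_
    have heq : 1 + w * (ε * u) / τ + (w * (ε * u) / τ) ^ 2
        = c0 + c1 * V ω + c2 * (V ω) ^ 2 := by
      rcases hε with h | h <;> subst h <;>
        (rw [hc0, hc1, hc2, hu]; field_simp; ring)
    exact heq.le
  have hmono : ∫ ω, Real.exp (ε / τ * (min (w * |V ω - θ|) τ * Real.sign (V ω - θ))) ∂μ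
      ≤ ∫ ω, (c0 + c1 * V ω + c2 * (V ω) ^ 2) ∂μ :=
    integral_mono_of_nonneg (ae_of_all _ fun ω => (Real.exp_pos _).le) hg_int
      (ae_of_all _ hpt)
  have hV2 : ∫ ω, (V ω) ^ 2 ∂μ = k + σ2 ^ 2 := by
    have he : ∫ ω, (V ω - σ2) ^ 2 ∂μ
        = ∫ ω, ((V ω) ^ 2 - 2 * σ2 * V ω + σ2 ^ 2) ∂μ := by
      congr 1; funext ω; ring
    rw [he] at hsec
    have hsub : Integrable (fun ω => V ω ^ 2 - 2 * σ2 * V ω) μ :=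
      hint2.sub (hint1.const_mul (2 * σ2))
    have hcm : Integrable (fun ω => 2 * σ2 * V ω) μ := hint1.const_mul (2 * σ2)
    rw [integral_add hsub (integrable_const _), integral_sub hint2 hcm,
      integral_const_mul _ _, hmean, integral_const, probReal_univ] at hsec
    simp at hsec
    linarith
  have hI : ∫ ω, (c0 + c1 * V ω + c2 * (V ω) ^ 2) ∂μ
      = c0 + c1 * σ2 + c2 * (k + σ2 ^ 2) := by
    have ha : Integrable (fun ω => c0 + c1 * V ω) μ :=
      (integrable_const c0).add (hint1.const_mul c1)
    have hb : Integrable (fun ω => c2 * V ω ^ 2) μ := hint2.const_mul c2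
    have hc : Integrable (fun ω => c1 * V ω) μ := hint1.const_mul c1
    rw [integral_add ha hb, integral_add (integrable_const c0) hc, integral_const_mul _ _,
      integral_const_mul _ _, integral_const, probReal_univ, hmean, hV2]
    simp
  rw [hI] at hmono
  refine hmono.trans ?_
  have halg : c0 + c1 * σ2 + c2 * (k + σ2 ^ 2)
      = (ε * (w * (σ2 - θ)) / τ + w ^ 2 * (k + (σ2 - θ) ^ 2) / τ ^ 2) + 1 := by
    rw [hc0, hc1, hc2]; field_simp; ring
  rw [halg]
  exact Real.add_one_le_exp _

theorem weighted_huber_score_mgf_bound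
    {Ω : Type*} [MeasurableSpace Ω] (μ : Measure Ω) [IsProbabilityMeasure μ]
    (m : ℕ) (X : Fin (m + 1) → Ω → ℝ) (σ κ : Fin (m + 1) → ℝ)
    (hXmeas : ∀ i, Measurable (X i))
    (hindep : iIndepFun X μ)
    (hvar : ∀ i, ∫ ω, (X i ω) ^ 2 ∂μ = (σ i) ^ 2)
    (hκ : ∀ i, ∫ ω, ((X i ω) ^ 2 - (σ i) ^ 2) ^ 2 ∂μ = κ i)
    (hκfin : ∀ i, Integrable (fun ω => (X i ω) ^ 4) μ)
    (w : Fin (m + 1) → ℝ) (hw : ∀ i, 0 ≤ w i)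
    (τ : ℝ) (hτ : 0 < τ) (θ : ℝ) :
    (∫ ω, Real.exp ((∑ i, min (w i * |(X i ω) ^ 2 - θ|) τ *
          Real.sign ((X i ω) ^ 2 - θ)) / τ) ∂μ
      ≤ Real.exp (∑ i, (w i * ((σ i) ^ 2 - θ) / τ +
          (w i) ^ 2 * (κ i + ((σ i) ^ 2 - θ) ^ 2) / τ ^ 2))) ∧
    (∫ ω, Real.exp (-(∑ i, min (w i * |(X i ω) ^ 2 - θ|) τ *
          Real.sign ((X i ω) ^ 2 - θ)) / τ) ∂μ
      ≤ Real.exp (∑ i, (-(w i * ((σ i) ^ 2 - θ)) / τ +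
          (w i) ^ 2 * (κ i + ((σ i) ^ 2 - θ) ^ 2) / τ ^ 2))) := by
  classical
  set Y : Fin (m + 1) → Ω → ℝ :=
    fun i ω => min (w i * |(X i ω) ^ 2 - θ|) τ * Real.sign ((X i ω) ^ 2 - θ) with hYdef
  have hfmeas : ∀ i, Measurable (fun u : ℝ =>
      min (w i * |u ^ 2 - θ|) τ * Real.sign (u ^ 2 - θ)) := by
    intro i
    have hb : Measurable (fun u : ℝ => u ^ 2 - θ) :=
      (measurable_id.pow_const 2).sub_const θ
    exact ((hb.abs.const_mul (w i)).min measurable_const).mul (measurable_realSign.comp hb)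
  have hYmeas : ∀ i, Measurable (Y i) := fun i => (hfmeas i).comp (hXmeas i)
  have hYindep : iIndepFun Y μ :=
    hindep.comp (fun i u => min (w i * |u ^ 2 - θ|) τ * Real.sign (u ^ 2 - θ)) hfmeas
  have hYbdd : ∀ i ω, |Y i ω| ≤ τ := by
    intro i ω
    rw [hYdef, abs_mul]
    have h1 : |min (w i * |(X i ω) ^ 2 - θ|) τ| ≤ τ := by
      rw [abs_of_nonneg (le_min (mul_nonneg (hw i) (abs_nonneg _)) hτ.le)]
      exact min_le_right _ _
    have h2 : |Real.sign ((X i ω) ^ 2 - θ)| ≤ 1 := by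
      rcases Real.sign_apply_eq ((X i ω) ^ 2 - θ) with h | h | h <;> rw [h] <;> norm_num
    calc |min (w i * |(X i ω) ^ 2 - θ|) τ| * |Real.sign ((X i ω) ^ 2 - θ)|
        ≤ τ * 1 := mul_le_mul h1 h2 (abs_nonneg _) hτ.le
      _ = τ := mul_one τ
  have hint_exp : ∀ (t : ℝ), |t| ≤ τ⁻¹ →
      ∀ i, Integrable (fun ω => Real.exp (t * Y i ω)) μ := by
    intro t ht i
    refine (integrable_const (Real.exp 1)).mono'
      (((hYmeas i).const_mul t).exp.aestronglyMeasurable) (ae_of_all _ fun ω => ?_)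
    rw [Real.norm_eq_abs, abs_of_pos (Real.exp_pos _)]
    refine Real.exp_le_exp.2 ?_
    calc t * Y i ω ≤ |t * Y i ω| := le_abs_self _
      _ = |t| * |Y i ω| := abs_mul _ _
      _ ≤ τ⁻¹ * τ := mul_le_mul ht (hYbdd i ω) (abs_nonneg _) (inv_nonneg.2 hτ.le)
      _ = 1 := inv_mul_cancel₀ hτ.ne'
  have hint1 : ∀ i, Integrable (fun ω => (X i ω) ^ 2) μ := by
    intro i
    have hg : Integrable (fun ω => (X i ω) ^ 4 + 1) μ := (hκfin i).add (integrable_const 1)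
    refine hg.mono'
      ((hXmeas i).pow_const 2).aestronglyMeasurable (ae_of_all _ fun ω => ?_)
    rw [Real.norm_eq_abs, abs_of_nonneg (sq_nonneg _)]
    nlinarith [sq_nonneg ((X i ω) ^ 2 - 1), sq_nonneg (X i ω)]
  have hint2 : ∀ i, Integrable (fun ω => ((X i ω) ^ 2) ^ 2) μ := by
    intro i
    have : (fun ω => ((X i ω) ^ 2) ^ 2) = fun ω => (X i ω) ^ 4 := by
      funext ω; ring
    rw [this]; exact hκfin i
  have key : ∀ (ε : ℝ), ε = 1 ∨ ε = -1 →
      ∫ ω, Real.exp ((ε / τ) * ∑ i, Y i ω) ∂μ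
        ≤ Real.exp (∑ i, (ε * (w i * ((σ i) ^ 2 - θ)) / τ +
            (w i) ^ 2 * (κ i + ((σ i) ^ 2 - θ) ^ 2) / τ ^ 2)) := by
    intro ε hε
    have htabs : |ε / τ| ≤ τ⁻¹ := by
      rcases hε with h | h <;> subst h <;>
        rw [abs_div, abs_of_pos hτ] <;> simp [one_div, le_refl]
    have h1 : ∫ ω, Real.exp ((ε / τ) * ∑ i, Y i ω) ∂μ = mgf (∑ i, Y i) μ (ε / τ) := by
      simp only [mgf, Finset.sum_apply]
    rw [h1, hYindep.mgf_sum hYmeas Finset.univ]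
    have hterm : ∀ i ∈ Finset.univ, mgf (Y i) μ (ε / τ)
        ≤ Real.exp (ε * (w i * ((σ i) ^ 2 - θ)) / τ +
            (w i) ^ 2 * (κ i + ((σ i) ^ 2 - θ) ^ 2) / τ ^ 2) := by
      intro i _
      have := single_term_bound μ (fun ω => (X i ω) ^ 2) ((hXmeas i).pow_const 2)
        ((σ i) ^ 2) (κ i) (w i) τ θ (hw i) hτ (hvar i) (hκ i) (hint1 i) (hint2 i) ε hε
      exact this
    calc ∏ i, mgf (Y i) μ (ε / τ)
        ≤ ∏ i, Real.exp (ε * (w i * ((σ i) ^ 2 - θ)) / τ +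
            (w i) ^ 2 * (κ i + ((σ i) ^ 2 - θ) ^ 2) / τ ^ 2) :=
          Finset.prod_le_prod (fun i _ => mgf_nonneg) hterm
      _ = Real.exp (∑ i, (ε * (w i * ((σ i) ^ 2 - θ)) / τ +
            (w i) ^ 2 * (κ i + ((σ i) ^ 2 - θ) ^ 2) / τ ^ 2)) := (Real.exp_sum _ _).symm
  have hsum : ∀ ω, ∑ i, min (w i * |(X i ω) ^ 2 - θ|) τ * Real.sign ((X i ω) ^ 2 - θ)
      = ∑ i, Y i ω := fun ω => rfl
  constructor
  · have h := key 1 (Or.inl rfl)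
    have hL : (∫ ω, Real.exp ((∑ i, min (w i * |(X i ω) ^ 2 - θ|) τ *
          Real.sign ((X i ω) ^ 2 - θ)) / τ) ∂μ)
        = ∫ ω, Real.exp ((1 / τ) * ∑ i, Y i ω) ∂μ := by
      congr 1; funext ω; rw [hsum ω]; congr 1; ring
    rw [hL]
    refine h.trans_eq ?_
    congr 1
    exact Finset.sum_congr rfl fun i _ => by ring
  · have h := key (-1) (Or.inr rfl)
    have hL : (∫ ω, Real.exp (-(∑ i, min (w i * |(X i ω) ^ 2 - θ|) τ *
          Real.sign ((X i ω) ^ 2 - θ)) / τ) ∂μ)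
        = ∫ ω, Real.exp ((-1 / τ) * ∑ i, Y i ω) ∂μ := by
      congr 1; funext ω; rw [hsum ω]; congr 1; ring
    rw [hL]
    refine h.trans_eq ?_
    congr 1
    exact Finset.sum_congr rfl fun i _ => by ring
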